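/- (Kesten-type bound) If F ∈ 𝓞𝓢 with c_F := limsup_{x→∞} F̄²*(x)/F̄(x) < ∞, then for every ε > 0 there exists c > 0 such that for all n ≥ 1 and all x ≥ 0, F̄^{n*}(x) ≤ c (c_F + ε − 1)ⁿ F̄(x). -/

import Mathlib

open MeasureTheory Filter Set
open scoped ENNReal Topology

/-- Tail of a distribution: `F̄(x) = μ(x, ∞)`. -/
noncomputable def tail (μ : Measure ℝ) (x : ℝ) : ℝ := (μ (Set.Ioi x)).toReal

/-- Conditional probability `P(A | X₁ + X₂ > x)` for two i.i.d. variables with law `μ`. -/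
noncomputable def condPair (μ : Measure ℝ) (A : Set (ℝ × ℝ)) (x : ℝ) : ℝ :=
  ((μ.prod μ) (A ∩ {p | x < p.1 + p.2})).toReal / ((μ.prod μ) {p | x < p.1 + p.2}).toReal

/-- The class 𝓙 : `lim_{K→∞} liminf_{x→∞} P(max(X₁,X₂) > x − K | X₁ + X₂ > x) = 1`. -/
def MemJ (μ : Measure ℝ) : Prop :=
  Tendsto (fun K : ℝ =>
      liminf (fun x : ℝ => condPair μ {p | x - K < max p.1 p.2} x) atTop)
    atTop (nhds 1)

/-- The class 𝓙 (equivalent form): for every nonnegative, unbounded, nondecreasing `g`,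
`lim_{x→∞} P(min(X₁,X₂) > g(x) | X₁ + X₂ > x) = 0`. -/
def MemJg (μ : Measure ℝ) : Prop :=
  ∀ g : ℝ → ℝ, (∀ x, 0 ≤ g x) → Monotone g → (∀ M, ∃ x, M < g x) →
    Tendsto (fun x : ℝ => condPair μ {p | g x < min p.1 p.2} x) atTop (nhds 0)

/-- Tail of the two-fold convolution: `F̄²*(x) = P(X₁ + X₂ > x)`. -/
noncomputable def tail2 (μ : Measure ℝ) (x : ℝ) : ℝ := ((μ.prod μ) {p | x < p.1 + p.2}).toReal

/-- Weak asymptotic tail-equivalence `F̄ ≍ Ḡ`: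
`0 < liminf F̄(x)/Ḡ(x) ≤ limsup F̄(x)/Ḡ(x) < ∞`. -/
def WeakTailEquiv (μ ν : Measure ℝ) : Prop :=
  (∃ c : ℝ, 0 < c ∧ ∀ᶠ x in atTop, c * tail ν x ≤ tail μ x) ∧
  (∃ C : ℝ, ∀ᶠ x in atTop, tail μ x ≤ C * tail ν x)

/-- Convolution of two laws on ℝ. -/
noncomputable def conv (μ ν : Measure ℝ) : Measure ℝ :=
  Measure.map (fun p : ℝ × ℝ => p.1 + p.2) (μ.prod ν)

/-- `n`-fold convolution `F^{n*}`. -/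
noncomputable def nconv (μ : Measure ℝ) : ℕ → Measure ℝ
  | 0 => Measure.dirac 0
  | n + 1 => conv (nconv μ n) μ

lemma hadd17 : Measurable fun p : ℝ × ℝ => p.1 + p.2 := measurable_fst.add measurable_snd

lemma hSmeas17 (x : ℝ) : MeasurableSet {p : ℝ × ℝ | x < p.1 + p.2} :=
  measurableSet_lt measurable_const hadd17

lemma nconv_prob (μ : Measure ℝ) [IsProbabilityMeasure μ] :
    ∀ n, IsProbabilityMeasure (nconv μ n)
  | 0 => by unfold nconv; infer_instance
  | n + 1 => by
      haveI := nconv_prob μ n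
      unfold nconv conv
      exact Measure.isProbabilityMeasure_map hadd17.aemeasurable

lemma nconv_one (μ : Measure ℝ) [IsProbabilityMeasure μ] : nconv μ 1 = μ := by
  show conv (Measure.dirac 0) μ = μ
  rw [conv, Measure.dirac_prod, Measure.map_map hadd17 measurable_prodMk_left]
  have : ((fun p : ℝ × ℝ => p.1 + p.2) ∘ Prod.mk (0 : ℝ)) = id := by
    funext b; simp
  rw [this, Measure.map_id]

lemma nconv_succ_apply (μ : Measure ℝ) [IsProbabilityMeasure μ] (n : ℕ) (x : ℝ) :
    nconv μ (n + 1) (Ioi x) = ∫⁻ y, nconv μ n (Ioi (x - y)) ∂μ := by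
  haveI := nconv_prob μ n
  show conv (nconv μ n) μ (Ioi x) = _
  rw [conv, Measure.map_apply hadd17 measurableSet_Ioi]
  have hpre : (fun p : ℝ × ℝ => p.1 + p.2) ⁻¹' Ioi x = {p : ℝ × ℝ | x < p.1 + p.2} := rfl
  rw [hpre, ← Measure.prod_swap, Measure.map_apply measurable_swap (hSmeas17 x),
    Measure.prod_apply (measurable_swap (hSmeas17 x))]
  refine lintegral_congr fun y => ?_
  congr 1
  ext a
  simp [Set.mem_preimage, sub_lt_iff_lt_add]

lemma tail2_lintegral (μ : Measure ℝ) [IsProbabilityMeasure μ] (x : ℝ) :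
    (μ.prod μ) {p : ℝ × ℝ | x < p.1 + p.2} = ∫⁻ y, μ (Ioi (x - y)) ∂μ := by
  rw [Measure.prod_apply (hSmeas17 x)]
  refine lintegral_congr fun y => ?_
  congr 1
  ext a
  simp [Set.mem_preimage, sub_lt_iff_lt_add']

theorem stmt17 (μ : Measure ℝ) [IsProbabilityMeasure μ]
    (hnn : μ (Set.Iio 0) = 0) (hub : ∀ x : ℝ, 0 < μ (Set.Ioi x))
    (hOS : ∃ B : ℝ, ∀ᶠ x in atTop, tail2 μ x / tail μ x ≤ B) :
    ∀ ε : ℝ, 0 < ε → ∃ c : ℝ, 0 < c ∧ ∀ n : ℕ, 1 ≤ n → ∀ x : ℝ, 0 ≤ x →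
      tail (nconv μ n) x
        ≤ c * (limsup (fun y : ℝ => tail2 μ y / tail μ y) atTop + ε - 1) ^ n * tail μ x := by
  intro ε hε
  set cF : ℝ := limsup (fun y : ℝ => tail2 μ y / tail μ y) atTop with hcFdef
  -- basic facts about tails
  have htail_pos : ∀ x : ℝ, 0 < tail μ x := fun x =>
    ENNReal.toReal_pos (hub x).ne' (measure_ne_top μ _)
  have hIoi_eq : ∀ x : ℝ, μ (Ioi x) = ENNReal.ofReal (tail μ x) := fun x =>
    (ENNReal.ofReal_toReal (measure_ne_top μ _)).symm
  have hIci0 : μ (Ici (0 : ℝ)) = 1 := by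
    have h := measure_add_measure_compl (μ := μ) (measurableSet_Ici (a := (0 : ℝ)))
    rw [compl_Ici, hnn, add_zero, measure_univ] at h
    exact h
  have hIoi_neg : ∀ t : ℝ, t < 0 → μ (Ioi t) = 1 := by
    intro t ht
    refine le_antisymm prob_le_one ?_
    calc (1 : ℝ≥0∞) = μ (Ici 0) := hIci0.symm
      _ ≤ μ (Ioi t) := measure_mono fun a ha => lt_of_lt_of_le ht ha
  have hbdd : IsBoundedUnder (· ≤ ·) atTop (fun y : ℝ => tail2 μ y / tail μ y) := by
    obtain ⟨B, hB⟩ := hOS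
    exact isBoundedUnder_of_eventually_le hB
  -- tail tends to 0
  have htail0 : Tendsto (fun x : ℝ => tail μ x) atTop (𝓝 0) := by
    have h1 : Tendsto (fun x : ℝ => μ (Iic x)) atTop (𝓝 (μ univ)) := tendsto_measure_Iic_atTop μ
    have h2 : Tendsto (fun x : ℝ => (μ (Iic x)).toReal) atTop (𝓝 1) := by
      have h3 := (ENNReal.tendsto_toReal (measure_ne_top μ univ)).comp h1
      simpa [measure_univ, Function.comp_def] using h3
    have h3 : ∀ x : ℝ, tail μ x = 1 - (μ (Iic x)).toReal := by
      intro x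
      have hsum : μ (Iic x) + μ (Ioi x) = 1 := by
        have h := measure_add_measure_compl (μ := μ) (measurableSet_Iic (a := x))
        rwa [compl_Iic, measure_univ] at h
      have h4 : (μ (Iic x)).toReal + (μ (Ioi x)).toReal = 1 := by
        rw [← ENNReal.toReal_add (measure_ne_top _ _) (measure_ne_top _ _), hsum,
          ENNReal.toReal_one]
      unfold tail
      linarith
    rw [show (fun x : ℝ => tail μ x) = fun x : ℝ => 1 - (μ (Iic x)).toReal from funext h3]
    have h5 := ((tendsto_const_nhds : Tendsto (fun _ : ℝ => (1 : ℝ)) atTop (𝓝 1)).sub h2)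
    simpa using h5
  -- inclusion-exclusion lower bound
  have hIE : ∀ x : ℝ, 0 ≤ x → (2 - tail μ x) * tail μ x ≤ tail2 μ x := by
    intro x hx
    have hsub : (Ioi x ×ˢ Ici (0 : ℝ)) ∪ (Ici (0 : ℝ) ×ˢ Ioi x) ⊆ {p : ℝ × ℝ | x < p.1 + p.2} := by
      rintro ⟨a, b⟩ (⟨ha, hb⟩ | ⟨ha, hb⟩) <;> simp only [mem_Ioi, mem_Ici, mem_setOf_eq] at * <;>
        linarith
    have hU := measure_union_add_inter (μ := μ.prod μ)
      (t := Ici (0 : ℝ) ×ˢ Ioi x) (Ioi x ×ˢ Ici (0 : ℝ))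
      ((measurableSet_Ici (a := (0 : ℝ))).prod (measurableSet_Ioi (a := x)))
    have hint : (Ioi x ×ˢ Ici (0 : ℝ)) ∩ (Ici (0 : ℝ) ×ˢ Ioi x) = Ioi x ×ˢ Ioi x := by
      rw [Set.prod_inter_prod]
      congr 1
      · exact inter_eq_left.mpr fun a ha => le_trans hx (le_of_lt ha)
      · exact inter_eq_right.mpr fun a ha => le_trans hx (le_of_lt ha)
    rw [hint, Measure.prod_prod, Measure.prod_prod, Measure.prod_prod, hIci0, mul_one,
      one_mul] at hU
    have hPU : (μ.prod μ) ((Ioi x ×ˢ Ici (0 : ℝ)) ∪ (Ici (0 : ℝ) ×ˢ Ioi x))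
        ≤ (μ.prod μ) {p : ℝ × ℝ | x < p.1 + p.2} := measure_mono hsub
    have h2 : ((μ.prod μ) ((Ioi x ×ˢ Ici (0 : ℝ)) ∪ (Ici (0 : ℝ) ×ˢ Ioi x))).toReal
        + tail μ x * tail μ x = tail μ x + tail μ x := by
      have h := congrArg ENNReal.toReal hU
      rwa [ENNReal.toReal_add (measure_ne_top _ _) (ENNReal.mul_ne_top (measure_ne_top _ _)
        (measure_ne_top _ _)), ENNReal.toReal_add (measure_ne_top _ _) (measure_ne_top _ _),
        ENNReal.toReal_mul] at h
    have h3 : ((μ.prod μ) ((Ioi x ×ˢ Ici (0 : ℝ)) ∪ (Ici (0 : ℝ) ×ˢ Ioi x))).toReal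
        ≤ tail2 μ x := ENNReal.toReal_mono (measure_ne_top _ _) hPU
    nlinarith
  -- cF ≥ 2
  have hcF2 : 2 ≤ cF := by
    refine le_of_forall_pos_le_add ?_
    intro δ hδ
    have hev1 : ∀ᶠ x : ℝ in atTop, tail μ x < δ := htail0.eventually_lt_const hδ
    have hev : ∀ᶠ x : ℝ in atTop, 2 - δ ≤ tail2 μ x / tail μ x := by
      filter_upwards [hev1, eventually_ge_atTop (0 : ℝ)] with x h1 h2
      rw [le_div_iff₀ (htail_pos x)]
      have h3 := hIE x h2
      nlinarith [mul_nonneg (sub_nonneg.mpr h1.le) (htail_pos x).le]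
    have := le_limsup_of_frequently_le hev.frequently hbdd
    linarith
  -- choose x₁
  have hevT : ∀ᶠ x : ℝ in atTop, tail2 μ x / tail μ x < cF + ε :=
    eventually_lt_of_limsup_lt (by rw [← hcFdef]; linarith) hbdd
  obtain ⟨x₀, hx₀⟩ := eventually_atTop.mp hevT
  set x₁ : ℝ := max x₀ 0 with hx₁def
  have hx₁0 : (0 : ℝ) ≤ x₁ := le_max_right _ _
  have hT : ∀ x : ℝ, x₁ ≤ x → tail2 μ x ≤ (cF + ε) * tail μ x := by
    intro x hx
    have h := hx₀ x (le_trans (le_max_left _ _) hx)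
    rw [div_lt_iff₀ (htail_pos x)] at h
    linarith [h]
  -- constants
  set T : ℝ := cF + ε with hTdef
  set r : ℝ := cF + ε - 1 with hrdef
  have hr1 : 1 < r := by rw [hrdef]; linarith
  have hrm1 : 0 < r - 1 := by rw [hrdef]; linarith
  have hT1 : 1 ≤ T := by rw [hTdef]; linarith
  set D : ℝ := (tail μ x₁)⁻¹ with hDdef
  have hD0 : 0 < D := inv_pos.mpr (htail_pos x₁)
  set A : ℝ := D * T with hAdef
  have hApos : 0 < A := mul_pos hD0 (by linarith)
  set K : ℝ := 1 + A / (r - 1) with hKdef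
  have hK1 : 1 ≤ K := le_add_of_nonneg_right (div_nonneg hApos.le hrm1.le)
  -- the recursive constants
  set cseq : ℕ → ℝ := fun n => Nat.rec (motive := fun _ => ℝ) 1 (fun _ ih => r * ih + A) n
    with hcseqdef
  have hc0 : cseq 0 = 1 := rfl
  have hcsucc : ∀ n : ℕ, cseq (n + 1) = r * cseq n + A := fun n => rfl
  have hc1 : ∀ n : ℕ, 1 ≤ cseq n := by
    intro n
    induction n with
    | zero => exact le_of_eq hc0.symm
    | succ n ih => rw [hcsucc]; nlinarith
  have hcK : ∀ n : ℕ, cseq (n + 1) + A / (r - 1) ≤ K * r ^ (n + 1) := by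
    intro n
    induction n with
    | zero =>
      rw [hcsucc, hc0, pow_one, mul_one]
      have h : K * r = r + A + A / (r - 1) := by
        rw [hKdef]
        field_simp
        ring
      linarith
    | succ n ih =>
      rw [hcsucc (n + 1), pow_succ]
      have hA' : (r - 1) * (A / (r - 1)) = A := by field_simp
      nlinarith [mul_le_mul_of_nonneg_left ih (by linarith : (0 : ℝ) ≤ r)]
  -- ENNReal versions
  have hx₀ENN : ∀ x : ℝ, x₁ ≤ x →
      (μ.prod μ) {p : ℝ × ℝ | x < p.1 + p.2} ≤ ENNReal.ofReal T * μ (Ioi x) := by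
    intro x hx
    calc (μ.prod μ) {p : ℝ × ℝ | x < p.1 + p.2} = ENNReal.ofReal (tail2 μ x) :=
          (ENNReal.ofReal_toReal (measure_ne_top _ _)).symm
      _ ≤ ENNReal.ofReal (T * tail μ x) := ENNReal.ofReal_le_ofReal (hT x hx)
      _ = ENNReal.ofReal T * μ (Ioi x) := by
          rw [ENNReal.ofReal_mul (by linarith), ← hIoi_eq]
  have hDmul : ENNReal.ofReal D * μ (Ioi x₁) = 1 := by
    rw [hIoi_eq x₁, hDdef, ENNReal.ofReal_inv_of_pos (htail_pos x₁), ENNReal.inv_mul_cancel]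
    · exact (ENNReal.ofReal_pos.mpr (htail_pos x₁)).ne'
    · exact ENNReal.ofReal_ne_top
  -- main induction
  have main : ∀ n : ℕ, ∀ x : ℝ, 0 ≤ x →
      nconv μ (n + 1) (Ioi x) ≤ ENNReal.ofReal (cseq (n + 1)) * μ (Ioi x) := by
    intro n
    induction n with
    | zero =>
      intro x hx
      rw [nconv_one μ]
      exact le_mul_of_one_le_left (zero_le) (ENNReal.one_le_ofReal.mpr (hc1 1))
    | succ n IH =>
      intro x hx
      haveI := nconv_prob μ (n + 1)
      haveI := nconv_prob μ (n + 2)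
      by_cases hxx : x₁ ≤ x
      · -- large x
        rw [nconv_succ_apply]
        have hsplit := (lintegral_add_compl (μ := μ)
          (fun y => nconv μ (n + 1) (Ioi (x - y))) (measurableSet_Iic (a := x - x₁))).symm
        rw [compl_Iic] at hsplit
        rw [hsplit]
        have hB1 : ∫⁻ y in Iic (x - x₁), nconv μ (n + 1) (Ioi (x - y)) ∂μ
            ≤ ENNReal.ofReal (cseq (n + 1) * r) * μ (Ioi x) := by
          have hstep : ∫⁻ y in Iic (x - x₁), nconv μ (n + 1) (Ioi (x - y)) ∂μ
              ≤ ENNReal.ofReal (cseq (n + 1)) * ∫⁻ y in Iic (x - x₁), μ (Ioi (x - y)) ∂μ := by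
            rw [← lintegral_const_mul' _ _ ENNReal.ofReal_ne_top]
            refine setLIntegral_mono' measurableSet_Iic fun y hy => ?_
            have hy' : y ≤ x - x₁ := hy
            exact IH (x - y) (by linarith)
          have hmid : ∫⁻ y in Iic (x - x₁), μ (Ioi (x - y)) ∂μ + μ (Ioi x)
              ≤ ENNReal.ofReal T * μ (Ioi x) := by
            have hdisj : Disjoint (Iic (x - x₁)) (Ioi x) := Iic_disjoint_Ioi (by linarith)
            have hIoieq : ∫⁻ y in Ioi x, μ (Ioi (x - y)) ∂μ = μ (Ioi x) := by
              rw [setLIntegral_congr_fun measurableSet_Ioi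
                (fun y (hy : x < y) => hIoi_neg (x - y) (by linarith)),
                setLIntegral_one]
            calc ∫⁻ y in Iic (x - x₁), μ (Ioi (x - y)) ∂μ + μ (Ioi x)
                = ∫⁻ y in Iic (x - x₁), μ (Ioi (x - y)) ∂μ
                  + ∫⁻ y in Ioi x, μ (Ioi (x - y)) ∂μ := by rw [hIoieq]
              _ = ∫⁻ y in Iic (x - x₁) ∪ Ioi x, μ (Ioi (x - y)) ∂μ :=
                  (lintegral_union measurableSet_Ioi hdisj).symm
              _ ≤ ∫⁻ y, μ (Ioi (x - y)) ∂μ :=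
                  lintegral_mono' Measure.restrict_le_self le_rfl
              _ = (μ.prod μ) {p : ℝ × ℝ | x < p.1 + p.2} := (tail2_lintegral μ x).symm
              _ ≤ ENNReal.ofReal T * μ (Ioi x) := hx₀ENN x hxx
          have h1 : ∫⁻ y in Iic (x - x₁), μ (Ioi (x - y)) ∂μ
              ≤ ENNReal.ofReal T * μ (Ioi x) - μ (Ioi x) :=
            ENNReal.le_sub_of_add_le_right (measure_ne_top μ _) hmid
          have h2 : ENNReal.ofReal T * μ (Ioi x) - μ (Ioi x)
              = ENNReal.ofReal r * μ (Ioi x) := by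
            rw [show ENNReal.ofReal T * μ (Ioi x) - μ (Ioi x)
                = (ENNReal.ofReal T - 1) * μ (Ioi x) by
              rw [ENNReal.sub_mul fun _ _ => measure_ne_top μ _, one_mul]]
            rw [← ENNReal.ofReal_one, ← ENNReal.ofReal_sub _ zero_le_one]
          calc ∫⁻ y in Iic (x - x₁), nconv μ (n + 1) (Ioi (x - y)) ∂μ
              ≤ ENNReal.ofReal (cseq (n + 1)) * (ENNReal.ofReal r * μ (Ioi x)) :=
                hstep.trans (mul_le_mul_right (h1.trans_eq h2) _)
            _ = ENNReal.ofReal (cseq (n + 1) * r) * μ (Ioi x) := by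
                rw [← mul_assoc, ← ENNReal.ofReal_mul (by linarith [hc1 (n + 1)])]
        have hB2 : ∫⁻ y in Ioi (x - x₁), nconv μ (n + 1) (Ioi (x - y)) ∂μ
            ≤ ENNReal.ofReal A * μ (Ioi x) := by
          have hstep : ∫⁻ y in Ioi (x - x₁), nconv μ (n + 1) (Ioi (x - y)) ∂μ
              ≤ ENNReal.ofReal D * ∫⁻ y in Ioi (x - x₁), μ (Ioi (x - y)) ∂μ := by
            rw [← lintegral_const_mul' _ _ ENNReal.ofReal_ne_top]
            refine setLIntegral_mono' measurableSet_Ioi fun y hy => ?_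
            have hy' : x - x₁ < y := hy
            refine le_trans prob_le_one ?_
            calc (1 : ℝ≥0∞) = ENNReal.ofReal D * μ (Ioi x₁) := hDmul.symm
              _ ≤ ENNReal.ofReal D * μ (Ioi (x - y)) :=
                  mul_le_mul_right (measure_mono (Ioi_subset_Ioi (by linarith))) _
          calc ∫⁻ y in Ioi (x - x₁), nconv μ (n + 1) (Ioi (x - y)) ∂μ
              ≤ ENNReal.ofReal D * ∫⁻ y in Ioi (x - x₁), μ (Ioi (x - y)) ∂μ := hstep
            _ ≤ ENNReal.ofReal D * ∫⁻ y, μ (Ioi (x - y)) ∂μ :=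
                mul_le_mul_right (lintegral_mono' Measure.restrict_le_self le_rfl) _
            _ = ENNReal.ofReal D * (μ.prod μ) {p : ℝ × ℝ | x < p.1 + p.2} := by
                rw [tail2_lintegral]
            _ ≤ ENNReal.ofReal D * (ENNReal.ofReal T * μ (Ioi x)) :=
                mul_le_mul_right (hx₀ENN x hxx) _
            _ = ENNReal.ofReal A * μ (Ioi x) := by
                rw [← mul_assoc, ← ENNReal.ofReal_mul hD0.le, hAdef]
        calc ∫⁻ y in Iic (x - x₁), nconv μ (n + 1) (Ioi (x - y)) ∂μ
            + ∫⁻ y in Ioi (x - x₁), nconv μ (n + 1) (Ioi (x - y)) ∂μ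
            ≤ ENNReal.ofReal (cseq (n + 1) * r) * μ (Ioi x)
              + ENNReal.ofReal A * μ (Ioi x) := add_le_add hB1 hB2
          _ = ENNReal.ofReal (cseq (n + 1) * r + A) * μ (Ioi x) := by
              rw [← add_mul, ← ENNReal.ofReal_add (by nlinarith [hc1 (n + 1)]) hApos.le]
          _ = ENNReal.ofReal (cseq (n + 2)) * μ (Ioi x) := by
              rw [hcsucc (n + 1), mul_comm (cseq (n + 1)) r]
      · -- small x
        push_neg at hxx
        calc nconv μ (n + 2) (Ioi x) ≤ 1 := prob_le_one
          _ = ENNReal.ofReal D * μ (Ioi x₁) := hDmul.symm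
          _ ≤ ENNReal.ofReal D * μ (Ioi x) :=
              mul_le_mul_right (measure_mono (Ioi_subset_Ioi hxx.le)) _
          _ ≤ ENNReal.ofReal (cseq (n + 2)) * μ (Ioi x) := by
              refine mul_le_mul_left (ENNReal.ofReal_le_ofReal ?_) _
              rw [hcsucc (n + 1)]
              nlinarith [hc1 (n + 1)]
  -- conclusion
  refine ⟨K, by linarith, ?_⟩
  intro n hn x hx
  obtain ⟨m, rfl⟩ : ∃ m, n = m + 1 := ⟨n - 1, (Nat.succ_pred_eq_of_pos hn).symm⟩
  have h := main m x hx
  have hfin : ENNReal.ofReal (cseq (m + 1)) * μ (Ioi x) ≠ ⊤ :=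
    ENNReal.mul_ne_top ENNReal.ofReal_ne_top (measure_ne_top _ _)
  have h2 : tail (nconv μ (m + 1)) x ≤ cseq (m + 1) * tail μ x := by
    have h3 := ENNReal.toReal_mono hfin h
    rwa [ENNReal.toReal_mul, ENNReal.toReal_ofReal (by linarith [hc1 (m + 1)])] at h3
  have h3 : cseq (m + 1) ≤ K * r ^ (m + 1) :=
    le_trans (le_add_of_nonneg_right (div_nonneg hApos.le hrm1.le)) (hcK m)
  calc tail (nconv μ (m + 1)) x ≤ cseq (m + 1) * tail μ x := h2
    _ ≤ K * r ^ (m + 1) * tail μ x :=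
        mul_le_mul_of_nonneg_right h3 (htail_pos x).le
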